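/- Let θ : ℝ → ℝ be twice differentiable and set κ = θ', T(s) = (cos θ(s), sin θ(s)), N(s) = (−sin θ(s), cos θ(s)). Suppose there exist a vector a ∈ ℝ² and a function c : ℝ → ℝ such that for all s, (κ(s)² + c(s))·T(s) − κ'(s)·N(s) + a/2 = 0. Then there exist constants μ ≥ 0 and φ ∈ ℝ such that θ''(s) + μ sin(θ(s) − φ) = 0 for all s. -/

import Mathlib

/-- The Euler–Lagrange equation of the elastic energy implies the
pendulum equation `θ'' + μ sin(θ − φ) = 0`. -/
theorem elastica_pendulum_equation (θ : ℝ → ℝ)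
    (h1 : ∀ s, DifferentiableAt ℝ θ s)
    (h2 : ∀ s, DifferentiableAt ℝ (deriv θ) s)
    (a : ℝ × ℝ) (c : ℝ → ℝ)
    (hEL : ∀ s : ℝ,
      ((deriv θ s) ^ 2 + c s) • ((Real.cos (θ s), Real.sin (θ s)) : ℝ × ℝ)
        - (deriv (deriv θ) s) • ((-Real.sin (θ s), Real.cos (θ s)) : ℝ × ℝ)
        + (1 / 2 : ℝ) • a = 0) :
    ∃ μ : ℝ, 0 ≤ μ ∧ ∃ φ : ℝ, ∀ s : ℝ,
      deriv (deriv θ) s + μ * Real.sin (θ s - φ) = 0 := by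
  obtain ⟨a₁, a₂⟩ := a
  set z : ℂ := ⟨a₁, a₂⟩ with hz
  refine ⟨‖z‖ / 2, by positivity, Complex.arg z, fun s => ?_⟩
  have habs := Complex.norm_mul_cos_add_sin_mul_I z
  have ha₁ : a₁ = ‖z‖ * Real.cos (Complex.arg z) := by
    have := congrArg Complex.re habs
    simpa [hz, Complex.ext_iff] using this.symm
  have ha₂ : a₂ = ‖z‖ * Real.sin (Complex.arg z) := by
    have := congrArg Complex.im habs
    simpa [hz, Complex.ext_iff] using this.symm
  have h := hEL s
  have e1 := congrArg Prod.fst h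
  have e2 := congrArg Prod.snd h
  simp [Prod.smul_def] at e1 e2
  rw [Real.sin_sub, ha₁, ha₂] at *
  linear_combination (Real.sin (θ s)) * e1 - (Real.cos (θ s)) * e2 -
    (deriv (deriv θ) s) * Real.sin_sq_add_cos_sq (θ s)
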